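/- arXiv:2011.11713 — 2 statements merged into one kernel-verified Lean document; each statement's English description precedes it below -/
import Mathlib

section
/- Let d, k, m be natural numbers with 2k ≤ d, let W be a real m×d matrix, and let G : ℝ^m → ℝ be any function. Write each input x ∈ ℝ^d as x = (u, v, w) with u ∈ ℝ^k the first k coordinates, v ∈ ℝ^k the next k coordinates, and w ∈ ℝ^{d−2k} the remaining coordinates, and define the network prediction f̂(u, v, w) = G(W·(u, v, w)). If f̂ is partially exchangeable, i.e. f̂(u, v, w) = f̂(v, u, w) for all u, v ∈ ℝ^k and w ∈ ℝ^{d−2k}, then for every x ∈ ℝ^k the vector z ∈ ℝ^m with components z_j = Σ_{i=1}^{k} (W_{j,i} − W_{j,k+i}) x_i satisfies G(z) = G(−z); that is, G is even on the linear span of the differences of the u-block and v-block columns of W. -/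
/-- **Evenness step in Theorem 1.**
With the input dimension written as `d = k + k + r` (so `2k ≤ d`), the network
prediction is `f̂ (u, v, w) = G (W.mulVec (u, v, w))`.  If `f̂` is partially
exchangeable in the two `k`-blocks, then for every `x ∈ ℝ^k` the vector
`z_j = ∑ i, (W j i − W j (k+i)) x i` satisfies `G z = G (−z)`. -/
theorem evenness_on_span_of_partially_exchangeable
    (k r m : ℕ) (W : Matrix (Fin m) (Fin (k + k + r)) ℝ)
    (G : (Fin m → ℝ) → ℝ)
    (hex : ∀ (u v : Fin k → ℝ) (w : Fin r → ℝ),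
      G (W.mulVec (Fin.append (Fin.append u v) w)) =
        G (W.mulVec (Fin.append (Fin.append v u) w)))
    (x : Fin k → ℝ) :
    G (fun j => ∑ i : Fin k,
        (W j (Fin.castAdd r (Fin.castAdd k i)) - W j (Fin.castAdd r (Fin.natAdd k i))) * x i) =
      G (-(fun j => ∑ i : Fin k,
        (W j (Fin.castAdd r (Fin.castAdd k i)) - W j (Fin.castAdd r (Fin.natAdd k i))) * x i)) := by
  have key : ∀ (u v : Fin k → ℝ),
      W.mulVec (Fin.append (Fin.append u v) (0 : Fin r → ℝ)) =
        fun j => ∑ i : Fin k, (W j (Fin.castAdd r (Fin.castAdd k i)) * u i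
          + W j (Fin.castAdd r (Fin.natAdd k i)) * v i) := by
    intro u v
    funext j
    simp only [Matrix.mulVec, dotProduct, Fin.sum_univ_add, Fin.append_left,
      Fin.append_right, Pi.zero_apply, mul_zero, Finset.sum_const_zero, add_zero,
      Finset.sum_add_distrib]
  have h := hex x (-x) 0
  rw [key, key] at h
  convert h using 2 <;> funext j <;> [skip; rw [Pi.neg_apply, ← Finset.sum_neg_distrib]] <;>
    exact Finset.sum_congr rfl (by intro i _; simp; ring)
end

section
/- Let d, k, m be natural numbers with 2k ≤ d, let W be a real m×d matrix, and let G : ℝ^m → ℝ. Define f̂(u, v, w) = G(W·(u, v, w)) for u, v ∈ ℝ^k, w ∈ ℝ^{d−2k}. Suppose f̂ is partially exchangeable, i.e. f̂(u, v, w) = f̂(v, u, w) for all u, v, w, and suppose in addition that the linear map ℝ^k → ℝ^m sending x to the vector with components z_j = Σ_{i=1}^{k} (W_{j,i} − W_{j,k+i}) x_i is surjective. Then G is an even function on ℝ^m, i.e. G(z) = G(−z) for all z ∈ ℝ^m. -/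
/-- **Theorem 1 of the paper.**
With the input dimension written as `d = k + k + r` (so `2k ≤ d`), the network
prediction is `f̂ (u, v, w) = G (W.mulVec (u, v, w))`.  If `f̂` is partially
exchangeable in the two `k`-blocks, and the linear map
`x ↦ (fun j => ∑ i, (W j i − W j (k+i)) x i)` from `ℝ^k` to `ℝ^m` is surjective
(the non-triviality assumption), then `G` is an even function on `ℝ^m`. -/
theorem even_of_partially_exchangeable_of_surjective
    (k r m : ℕ) (W : Matrix (Fin m) (Fin (k + k + r)) ℝ)
    (G : (Fin m → ℝ) → ℝ)
    (hex : ∀ (u v : Fin k → ℝ) (w : Fin r → ℝ),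
      G (W.mulVec (Fin.append (Fin.append u v) w)) =
        G (W.mulVec (Fin.append (Fin.append v u) w)))
    (hsurj : Function.Surjective
      (fun x : Fin k → ℝ => (fun j => ∑ i : Fin k,
        (W j (Fin.castAdd r (Fin.castAdd k i)) - W j (Fin.castAdd r (Fin.natAdd k i))) * x i :
        Fin m → ℝ))) :
    ∀ z : Fin m → ℝ, G z = G (-z) := by
  have key : ∀ u : Fin k → ℝ,
      W.mulVec (Fin.append (Fin.append u (-u)) 0) =
      (fun j => ∑ i : Fin k,
        (W j (Fin.castAdd r (Fin.castAdd k i)) - W j (Fin.castAdd r (Fin.natAdd k i))) * u i) := by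
    intro u
    funext j
    simp only [Matrix.mulVec, dotProduct, Fin.sum_univ_add, Fin.append_left,
      Fin.append_right, Pi.neg_apply, Pi.zero_apply, mul_zero, mul_neg,
      Finset.sum_const_zero, add_zero, sub_mul]
    rw [Finset.sum_sub_distrib, Finset.sum_neg_distrib]
    ring
  intro z
  obtain ⟨u, hu⟩ := hsurj z
  have h1 : W.mulVec (Fin.append (Fin.append u (-u)) 0) = z := by rw [key]; exact hu
  have h2 : W.mulVec (Fin.append (Fin.append (-u) u) 0) = -z := by
    have := key (-u)
    rw [neg_neg] at this
    rw [this, ← hu]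
    funext j
    simp [← Finset.sum_neg_distrib, mul_neg]
  have := hex u (-u) 0
  rw [h1, h2] at this
  exact this
end
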